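/- arXiv:1905.07952 — 8 statements merged into one kernel-verified Lean document; each statement's English description precedes it below -/
import Mathlib

section
/- Let H be a separable infinite-dimensional complex Hilbert space, let E be a complex inner product space of finite dimension N ≥ 1, and let (ψ_n, φ_n)_{n ∈ ℕ} (with ψ_n ∈ H, φ_n ∈ E) be an orthonormal (Hilbert) basis of the Hilbert space H × E equipped with the product inner product. Let Θ ⊆ ℕ be a finite set of cardinality N. Then the family (ψ_n)_{n ∈ ℕ∖Θ} is a Riesz basis for H if and only if the family (φ_n)_{n ∈ Θ} is linearly independent in E. -/
/-!
The vectors `v n = (ψ n, φ n)` with `n ∉ Θ` form a Hilbert basis of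
`K = (span {v n | n ∈ Θ})ᗮ`, and `ψ n` is the image of `v n` under the first projection
`T : K → H`. Since `H` is separable and infinite-dimensional, it has a Hilbert basis indexed by
`ℕ ∖ Θ`, so `(ψ n)_{n ∉ Θ}` is a Riesz basis exactly when `T` is bijective. `T` is injective iff
no nonzero `(0, e)` lies in `K`, i.e. iff the `φ n`, `n ∈ Θ`, span `E`; as `#Θ = dim E`, the map
`e ↦ (⟪φ n, e⟫)_{n ∈ Θ}` is then onto, so any `h ∈ H` lifts to `(h, e) ∈ K`. Finally, `#Θ = dim E`
vectors span `E` iff they are linearly independent.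
-/

open scoped InnerProductSpace

open Submodule

section

variable {ι 𝕜 E : Type*} [RCLike 𝕜] [NormedAddCommGroup E] [InnerProductSpace 𝕜 E]

lemma Orthonormal.one_le_dist {v : ι → E} (hv : Orthonormal 𝕜 v) {i j : ι} (hij : i ≠ j) :
    1 ≤ dist (v i) (v j) := by
  have hsq : ‖v i - v j‖ ^ 2 = 2 := by
    rw [@norm_sub_sq 𝕜, hv.inner_eq_zero hij, hv.1 i, hv.1 j]
    norm_num
  rw [dist_eq_norm]
  nlinarith [norm_nonneg (v i - v j)]

lemma Orthonormal.countable [TopologicalSpace.SeparableSpace E] {v : ι → E}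
    (hv : Orthonormal 𝕜 v) : Countable ι :=
  Pairwise.countable_of_isOpen_disjoint (s := fun i ↦ Metric.ball (v i) (1 / 2))
    (fun _ _ hij ↦ Metric.ball_disjoint_ball (by linarith [hv.one_le_dist hij]))
    (fun _ ↦ Metric.isOpen_ball) (fun _ ↦ Metric.nonempty_ball.2 (by norm_num))

lemma Submodule.mem_orthogonal_span_iff {s : Set E} {x : E} :
    x ∈ (span 𝕜 s)ᗮ ↔ ∀ u ∈ s, ⟪u, x⟫_𝕜 = 0 := by
  rw [← span_singleton_le_iff_mem, ← isOrtho_iff_le, isOrtho_comm, isOrtho_span]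
  simp

lemma linearIndependent_iff_span_eq_top_of_card_eq_finrank {K V : Type*} [DivisionRing K]
    [AddCommGroup V] [Module K V] [FiniteDimensional K V] [Fintype ι] {b : ι → V}
    (h : Fintype.card ι = Module.finrank K V) :
    LinearIndependent K b ↔ span K (Set.range b) = ⊤ :=
  ⟨fun hb ↦ hb.span_eq_top_of_card_eq_finrank' h,
    fun hb ↦ linearIndependent_of_top_le_span_of_card_eq_finrank hb.ge h⟩

namespace HilbertBasis

lemma finiteDimensional [Finite ι] (b : HilbertBasis ι 𝕜 E) : FiniteDimensional 𝕜 E :=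
  have := Fintype.ofFinite ι
  Module.Finite.of_basis b.toOrthonormalBasis.toBasis

lemma nonempty_of_countable_of_infinite [CompleteSpace E] [TopologicalSpace.SeparableSpace E]
    (hE : ¬ FiniteDimensional 𝕜 E) (ι : Type*) [Countable ι] [Infinite ι] :
    Nonempty (HilbertBasis ι 𝕜 E) := by
  obtain ⟨w, b, -⟩ := exists_hilbertBasis 𝕜 E
  have := b.orthonormal.countable
  have : Infinite w := not_finite_iff_infinite.1 fun _ ↦ hE b.finiteDimensional
  obtain ⟨e⟩ := nonempty_equiv_of_countable (α := ι) (β := w)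
  exact ⟨.mk (b.orthonormal.comp e e.injective) (by rw [e.surjective.range_comp, b.dense_span])⟩

lemma eq_zero_of_forall_inner_eq_zero (b : HilbertBasis ι 𝕜 E) {x : E}
    (hx : ∀ i, ⟪b i, x⟫_𝕜 = 0) : x = 0 :=
  b.repr.map_eq_zero_iff.1 (by ext i; simp [b.repr_apply_apply, hx])

lemma apply_mem_orthogonal_span_image (b : HilbertBasis ι 𝕜 E) {s : Set ι} {i : ι} (hi : i ∉ s) :
    b i ∈ (span 𝕜 (b '' s))ᗮ :=
  mem_orthogonal_span_iff.2 <| by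
    rintro _ ⟨j, hj, rfl⟩
    exact b.orthonormal.inner_eq_zero fun h ↦ hi (h ▸ hj)

noncomputable def orthogonalImage [CompleteSpace E] (b : HilbertBasis ι 𝕜 E) (s : Set ι) :
    HilbertBasis {i // i ∉ s} 𝕜 (span 𝕜 (b '' s))ᗮ :=
  .mkOfOrthogonalEqBot ((b.orthonormal.comp _ Subtype.val_injective).codRestrict _
      fun i ↦ b.apply_mem_orthogonal_span_image i.2) <| by
    rw [eq_bot_iff]
    intro x hx
    rw [mem_orthogonal_span_iff, Set.forall_mem_range] at hx
    rw [mem_bot, ← Submodule.coe_eq_zero]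
    refine b.eq_zero_of_forall_inner_eq_zero fun i ↦ ?_
    by_cases hi : i ∈ s
    · exact mem_orthogonal_span_iff.1 x.2 _ ⟨i, hi, rfl⟩
    · exact hx ⟨i, hi⟩

@[simp]
lemma coe_orthogonalImage_apply [CompleteSpace E] (b : HilbertBasis ι 𝕜 E) (s : Set ι)
    (i : {i // i ∉ s}) : (b.orthogonalImage s i : E) = b i := by
  rw [orthogonalImage, HilbertBasis.coe_mkOfOrthogonalEqBot]
  rfl

variable {H : Type*} [NormedAddCommGroup H] [InnerProductSpace 𝕜 H]

lemma bijective_of_map_eq (w : HilbertBasis ι 𝕜 E) (u : HilbertBasis ι 𝕜 H) (S : H ≃L[𝕜] H)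
    (T : E →L[𝕜] H) (h : ∀ i, S (u i) = T (w i)) : Function.Bijective T := by
  classical
  let U : E ≃L[𝕜] H := (w.repr.trans u.repr.symm).toContinuousLinearEquiv.trans S
  have hUT : (U : E →L[𝕜] H) = T := by
    refine ContinuousLinearMap.ext_on
      (Submodule.dense_iff_topologicalClosure_eq_top.2 w.dense_span) ?_
    rintro _ ⟨i, rfl⟩
    simp [U, w.repr_self, u.repr_symm_single, h]
  rw [← hUT]
  exact U.bijective

lemma exists_map_eq_of_bijective [CompleteSpace E] [CompleteSpace H] (w : HilbertBasis ι 𝕜 E)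
    (u : HilbertBasis ι 𝕜 H) (T : E →L[𝕜] H) (hT : Function.Bijective T) :
    ∃ S : H ≃L[𝕜] H, ∀ i, S (u i) = T (w i) := by
  classical
  refine ⟨(u.repr.trans w.repr.symm).toContinuousLinearEquiv.trans
    (.ofBijective T (LinearMap.ker_eq_bot.2 hT.1) (LinearMap.range_eq_top.2 hT.2)), fun i ↦ ?_⟩
  simp [u.repr_self, w.repr_symm_single]

lemma exists_map_eq_iff_bijective [CompleteSpace E] [CompleteSpace H] (w : HilbertBasis ι 𝕜 E)
    (hH : Nonempty (HilbertBasis ι 𝕜 H)) (T : E →L[𝕜] H) :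
    (∃ (u : HilbertBasis ι 𝕜 H) (S : H ≃L[𝕜] H), ∀ i, S (u i) = T (w i)) ↔
      Function.Bijective T :=
  ⟨fun ⟨u, S, h⟩ ↦ w.bijective_of_map_eq u S T h,
    fun hT ↦ ⟨hH.some, w.exists_map_eq_of_bijective hH.some T hT⟩⟩

end HilbertBasis

variable {H : Type*} [NormedAddCommGroup H] [InnerProductSpace 𝕜 H] (v : ι → WithLp 2 (H × E))

lemma injective_fstL_orthogonal_span_image_iff (s : Set ι) :
    Function.Injective (WithLp.fstL 2 𝕜 H E ∘L (span 𝕜 (v '' s))ᗮ.subtypeL) ↔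
      (span 𝕜 ((fun i ↦ (v i).snd) '' s))ᗮ = ⊥ := by
  rw [injective_iff_map_eq_zero, eq_bot_iff]
  constructor
  · intro hT e he
    rw [mem_orthogonal_span_iff, Set.forall_mem_image] at he
    have hx : WithLp.toLp 2 ((0 : H), e) ∈ (span 𝕜 (v '' s))ᗮ := by
      rw [mem_orthogonal_span_iff, Set.forall_mem_image]
      intro i hi
      simp [he hi]
    exact (mem_bot 𝕜).2 (congrArg (fun x : (span 𝕜 (v '' s))ᗮ ↦ (x : WithLp 2 (H × E)).snd)
      (hT ⟨_, hx⟩ rfl))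
  · intro h x hx
    have hfst : (x : WithLp 2 (H × E)).fst = 0 := hx
    have hsnd : (x : WithLp 2 (H × E)).snd = 0 := by
      refine (mem_bot 𝕜).1 <| h <| mem_orthogonal_span_iff.2 <| Set.forall_mem_image.2 fun i hi ↦ ?_
      simpa [hfst] using mem_orthogonal_span_iff.1 x.2 _ ⟨i, hi, rfl⟩
    exact Submodule.coe_eq_zero.1 <| (WithLp.ofLp_eq_zero 2).1 (Prod.ext hfst hsnd)

lemma surjective_fstL_orthogonal_span_image [FiniteDimensional 𝕜 E] (s : Finset ι)
    (hs : s.card = Module.finrank 𝕜 E) (h : (span 𝕜 ((fun i ↦ (v i).snd) '' s))ᗮ = ⊥) :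
    Function.Surjective (WithLp.fstL 2 𝕜 H E ∘L (span 𝕜 (v '' s))ᗮ.subtypeL) := by
  let L : E →ₗ[𝕜] s → 𝕜 := LinearMap.pi fun i ↦ innerₛₗ 𝕜 (v i).snd
  have hL_inj : Function.Injective L := by
    rw [← LinearMap.ker_eq_bot, eq_bot_iff, ← h]
    intro e he
    rw [mem_orthogonal_span_iff, Set.forall_mem_image]
    exact fun i hi ↦ congrFun he ⟨i, hi⟩
  have hL_surj : Function.Surjective L := by
    refine (LinearMap.injective_iff_surjective_of_finrank_eq_finrank ?_).1 hL_inj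
    simp [hs]
  intro y
  obtain ⟨e, he⟩ := hL_surj fun i ↦ -⟪(v i).fst, y⟫_𝕜
  have hx : WithLp.toLp 2 (y, e) ∈ (span 𝕜 (v '' s))ᗮ := by
    rw [mem_orthogonal_span_iff, Set.forall_mem_image]
    intro i hi
    have hei : ⟪(v i).snd, e⟫_𝕜 = -⟪(v i).fst, y⟫_𝕜 := congrFun he ⟨i, hi⟩
    simp [hei]
  exact ⟨⟨_, hx⟩, rfl⟩

lemma bijective_fstL_orthogonal_span_image_iff [FiniteDimensional 𝕜 E] (s : Finset ι)
    (hs : s.card = Module.finrank 𝕜 E) :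
    Function.Bijective (WithLp.fstL 2 𝕜 H E ∘L (span 𝕜 (v '' s))ᗮ.subtypeL) ↔
      span 𝕜 ((fun i ↦ (v i).snd) '' s) = ⊤ := by
  rw [← orthogonal_eq_bot_iff, ← injective_fstL_orthogonal_span_image_iff]
  exact ⟨And.left, fun hT ↦ ⟨hT, surjective_fstL_orthogonal_span_image v s hs
    ((injective_fstL_orthogonal_span_image_iff v s).1 hT)⟩⟩

end

theorem stmt_0_general
    {H : Type*} [NormedAddCommGroup H] [InnerProductSpace ℂ H] [CompleteSpace H]
    [TopologicalSpace.SeparableSpace H] (hH : ¬ FiniteDimensional ℂ H)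
    {E : Type*} [NormedAddCommGroup E] [InnerProductSpace ℂ E] [FiniteDimensional ℂ E]
    (N : ℕ) (hE : Module.finrank ℂ E = N)
    (ψ : ℕ → H) (φ : ℕ → E)
    (hON : Orthonormal ℂ (fun n : ℕ => (WithLp.equiv 2 (H × E)).symm (ψ n, φ n)))
    (hTotal : (Submodule.span ℂ
        (Set.range (fun n : ℕ => (WithLp.equiv 2 (H × E)).symm (ψ n, φ n)))).topologicalClosure
      = ⊤)
    (Θ : Finset ℕ) (hΘ : Θ.card = N) :
    (∃ (u : HilbertBasis {n : ℕ // n ∉ Θ} ℂ H) (S : H ≃L[ℂ] H),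
        ∀ n : {n : ℕ // n ∉ Θ}, S (u n) = ψ n) ↔
      LinearIndependent ℂ (fun n : Θ => φ n) := by
  let v : HilbertBasis ℕ ℂ (WithLp 2 (H × E)) := .mk hON hTotal.ge
  have hv : ∀ n, v n = (WithLp.equiv 2 (H × E)).symm (ψ n, φ n) :=
    congrFun (HilbertBasis.coe_mk hON hTotal.ge)
  let T := WithLp.fstL 2 ℂ H E ∘L (span ℂ (v '' Θ))ᗮ.subtypeL
  have hTw : ∀ n : {n : ℕ // n ∉ Θ}, T (v.orthogonalImage Θ n) = ψ n := fun n ↦ by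
    simp [T, hv]
  have hφ : (fun n ↦ (v n).snd) '' Θ = Set.range fun n : Θ ↦ φ n := by
    simp [hv, Set.image_eq_range]
  have : Infinite {n : ℕ // n ∉ Θ} := Θ.finite_toSet.infinite_compl.to_subtype
  simp_rw [← hTw]
  refine ((v.orthogonalImage Θ).exists_map_eq_iff_bijective
    (HilbertBasis.nonempty_of_countable_of_infinite hH _) T).trans ?_
  rw [bijective_fstL_orthogonal_span_image_iff _ Θ (hΘ.trans hE.symm), hφ,
    linearIndependent_iff_span_eq_top_of_card_eq_finrank (by simp [hΘ, hE])]

/-- Let `H` be a separable infinite-dimensional complex Hilbert space, `E` a complex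
inner product space of finite dimension `N ≥ 1`, and `(ψ n, φ n)` an orthonormal (Hilbert) basis
of `H × E` with the product (`L²`) inner product.  Let `Θ ⊆ ℕ` be finite of cardinality `N`.
Then `(ψ n)_{n ∉ Θ}` is a Riesz basis for `H` iff `(φ n)_{n ∈ Θ}` is linearly independent. -/
theorem stmt_0
    {H : Type*} [NormedAddCommGroup H] [InnerProductSpace ℂ H] [CompleteSpace H]
    [TopologicalSpace.SeparableSpace H] (hH : ¬ FiniteDimensional ℂ H)
    {E : Type*} [NormedAddCommGroup E] [InnerProductSpace ℂ E] [FiniteDimensional ℂ E]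
    (N : ℕ) (hN : 1 ≤ N) (hE : Module.finrank ℂ E = N)
    (ψ : ℕ → H) (φ : ℕ → E)
    (hON : Orthonormal ℂ (fun n : ℕ => (WithLp.equiv 2 (H × E)).symm (ψ n, φ n)))
    (hTotal : (Submodule.span ℂ
        (Set.range (fun n : ℕ => (WithLp.equiv 2 (H × E)).symm (ψ n, φ n)))).topologicalClosure
      = ⊤)
    (Θ : Finset ℕ) (hΘ : Θ.card = N) :
    (∃ (u : HilbertBasis {n : ℕ // n ∉ Θ} ℂ H) (S : H ≃L[ℂ] H),
        ∀ n : {n : ℕ // n ∉ Θ}, S (u n) = ψ n) ↔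
      LinearIndependent ℂ (fun n : Θ => φ n) :=
  stmt_0_general hH N hE ψ φ hON hTotal Θ hΘ
end

section
/- Let H be a separable infinite-dimensional complex Hilbert space, let E be a complex inner product space of finite dimension N ≥ 1, and let (ψ_n, φ_n)_{n ∈ ℕ} (with ψ_n ∈ H, φ_n ∈ E) be an orthonormal (Hilbert) basis of the Hilbert space H × E equipped with the product inner product. Let Θ ⊆ ℕ be a finite set of cardinality N. If the family (φ_n)_{n ∈ Θ} is linearly dependent in E, then there exists a nonzero y ∈ H such that ⟨y, ψ_n⟩_H = 0 for every n ∈ ℕ∖Θ; in particular, the family (ψ_n)_{n ∈ ℕ∖Θ} is not total in H (its closed linear span is a proper subspace of H). -/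
open scoped InnerProductSpace

/-- If the finite-dimensional components `(φ n)_{n ∈ Θ}` of the removed orthonormal
basis vectors are linearly dependent, then there is a nonzero `y ∈ H` orthogonal to all `ψ n`,
`n ∉ Θ`; in particular the closed linear span of `(ψ n)_{n ∉ Θ}` is a proper subspace of `H`. -/
theorem stmt_1
    {H : Type*} [NormedAddCommGroup H] [InnerProductSpace ℂ H] [CompleteSpace H]
    [TopologicalSpace.SeparableSpace H] (hH : ¬ FiniteDimensional ℂ H)
    {E : Type*} [NormedAddCommGroup E] [InnerProductSpace ℂ E] [FiniteDimensional ℂ E]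
    (N : ℕ) (hN : 1 ≤ N) (hE : Module.finrank ℂ E = N)
    (ψ : ℕ → H) (φ : ℕ → E)
    (hON : Orthonormal ℂ (fun n : ℕ => (WithLp.equiv 2 (H × E)).symm (ψ n, φ n)))
    (hTotal : (Submodule.span ℂ
        (Set.range (fun n : ℕ => (WithLp.equiv 2 (H × E)).symm (ψ n, φ n)))).topologicalClosure
      = ⊤)
    (Θ : Finset ℕ) (hΘ : Θ.card = N)
    (hdep : ¬ LinearIndependent ℂ (fun n : Θ => φ n)) :
    (∃ y : H, y ≠ 0 ∧ ∀ n ∉ Θ, ⟪y, ψ n⟫_ℂ = 0) ∧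
      (Submodule.span ℂ (ψ '' {n : ℕ | n ∉ Θ})).topologicalClosure ≠ ⊤ := by
  rw [Fintype.not_linearIndependent_iff] at hdep
  obtain ⟨c, hc0, i0, hi0⟩ := hdep
  set e : ℕ → WithLp 2 (H × E) := fun n => (WithLp.equiv 2 (H × E)).symm (ψ n, φ n) with he
  set y : H := ∑ i : Θ, c i • ψ i with hy
  let F : WithLp 2 (H × E) →ₗ[ℂ] H :=
    (LinearMap.fst ℂ H E).comp (WithLp.linearEquiv 2 ℂ (H × E)).toLinearMap
  let G : WithLp 2 (H × E) →ₗ[ℂ] E :=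
    (LinearMap.snd ℂ H E).comp (WithLp.linearEquiv 2 ℂ (H × E)).toLinearMap
  have hfst : (∑ i : Θ, c i • e i).fst = y := by
    show F (∑ i : Θ, c i • e i) = y
    rw [map_sum, hy]
    refine Finset.sum_congr rfl fun i _ => ?_
    rw [map_smul]
    rfl
  have hsnd : (∑ i : Θ, c i • e i).snd = 0 := by
    show G (∑ i : Θ, c i • e i) = 0
    rw [map_sum, ← hc0]
    refine Finset.sum_congr rfl fun i _ => ?_
    rw [map_smul]
    rfl
  have hyne : y ≠ 0 := by
    intro h
    have hv : (∑ i : Θ, c i • e i) = 0 := by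
      have : (∑ i : Θ, c i • e i) = ((WithLp.equiv 2 (H × E)).symm
          ((∑ i : Θ, c i • e i).fst, (∑ i : Θ, c i • e i).snd)) := rfl
      rw [this, hfst, hsnd, h]
      rfl
    have hli := hON.linearIndependent
    have := Fintype.linearIndependent_iff.mp (hli.comp (fun i : Θ => (i : ℕ))
      Subtype.coe_injective) c hv i0
    exact hi0 this
  have horth : ∀ n ∉ Θ, ⟪y, ψ n⟫_ℂ = 0 := by
    intro n hn
    have key : ⟪(∑ i : Θ, c i • e i), e n⟫_ℂ = 0 := by
      rw [sum_inner]
      refine Finset.sum_eq_zero fun i _ => ?_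
      rw [inner_smul_left, hON.2 (by rintro rfl; exact hn i.2), mul_zero]
    have : ⟪(∑ i : Θ, c i • e i), e n⟫_ℂ
        = ⟪(∑ i : Θ, c i • e i).fst, ψ n⟫_ℂ + ⟪(∑ i : Θ, c i • e i).snd, φ n⟫_ℂ := rfl
    rw [this, hfst, hsnd, inner_zero_left, add_zero] at key
    exact key
  refine ⟨⟨y, hyne, horth⟩, ?_⟩
  intro htop
  have hmem : y ∈ (Submodule.span ℂ (ψ '' {n : ℕ | n ∉ Θ}))ᗮ := by
    rw [Submodule.mem_orthogonal']
    intro u hu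
    induction hu using Submodule.span_induction with
    | mem x hx =>
      obtain ⟨n, hn, rfl⟩ := hx
      exact horth n hn
    | zero => exact inner_zero_right y
    | add x z _ _ hx hz => rw [inner_add_right, hx, hz, add_zero]
    | smul a x _ hx => rw [inner_smul_right, hx, mul_zero]
  rw [Submodule.topologicalClosure_eq_top_iff] at htop
  rw [htop, Submodule.mem_bot] at hmem
  exact hyne hmem
end

section
/- Let H be a separable infinite-dimensional complex Hilbert space, let E be a complex inner product space of finite dimension N ≥ 1, and let (ψ_n, φ_n)_{n ∈ ℕ} (with ψ_n ∈ H, φ_n ∈ E) be an orthonormal (Hilbert) basis of H × E with the product inner product. Let Θ ⊆ ℕ be a finite set of cardinality N and suppose the family (φ_n)_{n ∈ Θ} is linearly independent in E (hence a basis of E). Then there exists a unique continuous linear map T : H → E such that ⟨T y, φ_n⟩_E = −⟨y, ψ_n⟩_H for every y ∈ H and every n ∈ Θ; moreover, this map satisfies T ψ_m = φ_m for every m ∈ ℕ∖Θ. -/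
open scoped InnerProductSpace

/-! Inner products against a basis `b` of the finite-dimensional space `E` identify `E` with
`Θ → ℂ`, so the conditions on `T y` prescribe it uniquely and linearly in `y`. For `m ∉ Θ`,
orthogonality of `(ψ n, φ n)` and `(ψ m, φ m)` in `H × E` reads `⟪φ n, φ m⟫ = -⟪ψ n, ψ m⟫`,
which are exactly the inner products prescribed for `T (ψ m)`. -/

section InnerCoordinates

variable {𝕜 E ι : Type*} [RCLike 𝕜] [NormedAddCommGroup E] [InnerProductSpace 𝕜 E]

theorem inner_eq_neg_inner_iff_swap {F : Type*} [NormedAddCommGroup F] [InnerProductSpace 𝕜 F]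
    {x y : E} {u v : F} : ⟪x, y⟫_𝕜 = -⟪u, v⟫_𝕜 ↔ ⟪y, x⟫_𝕜 = -⟪v, u⟫_𝕜 := by
  rw [← inner_conj_symm y, ← inner_conj_symm v, ← map_neg, (starRingEnd 𝕜).injective.eq_iff]

theorem Orthonormal.inner_add_inner_eq_zero_of_ne {H : Type*} [NormedAddCommGroup H]
    [InnerProductSpace 𝕜 H] {ψ : ι → H} {φ : ι → E}
    (h : Orthonormal 𝕜 fun n => (WithLp.equiv 2 (H × E)).symm (ψ n, φ n)) {i j : ι}
    (hij : i ≠ j) : ⟪ψ i, ψ j⟫_𝕜 + ⟪φ i, φ j⟫_𝕜 = 0 := by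
  simpa [WithLp.prod_inner_apply] using h.2 hij

theorem Module.Basis.injective_pi_innerₛₗ (b : Module.Basis ι 𝕜 E) :
    Function.Injective (LinearMap.pi fun i => innerₛₗ 𝕜 (b i)) := fun _ _ h =>
  InnerProductSpace.ext_inner_left_basis b fun i => congrFun h i

variable [Fintype ι] [FiniteDimensional 𝕜 E]

noncomputable def Module.Basis.innerEquiv (b : Module.Basis ι 𝕜 E) : E ≃ₗ[𝕜] (ι → 𝕜) :=
  LinearMap.linearEquivOfInjective _ b.injective_pi_innerₛₗ
    (by simp [← Module.finrank_eq_card_basis b])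

@[simp]
theorem Module.Basis.innerEquiv_apply (b : Module.Basis ι 𝕜 E) (v : E) (i : ι) :
    b.innerEquiv v i = ⟪b i, v⟫_𝕜 :=
  rfl

theorem Module.Basis.existsUnique_continuousLinearMap_inner_eq {F : Type*}
    [AddCommGroup F] [Module 𝕜 F] [TopologicalSpace F] (b : Module.Basis ι 𝕜 E)
    (f : ι → F →L[𝕜] 𝕜) : ∃! T : F →L[𝕜] E, ∀ y i, ⟪b i, T y⟫_𝕜 = f i y := by
  refine ⟨(LinearMap.toContinuousLinearMap (b.innerEquiv.symm : (ι → 𝕜) →ₗ[𝕜] E)).comp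
    (ContinuousLinearMap.pi f), fun y i => ?_, fun T hT => ?_⟩
  · simpa using congrFun (b.innerEquiv.apply_symm_apply fun i => f i y) i
  · ext y
    exact InnerProductSpace.ext_inner_left_basis b fun i => by
      simpa [hT] using congrFun (b.innerEquiv.apply_symm_apply fun i => f i y).symm i

end InnerCoordinates

theorem stmt_3_general
    {H : Type*} [NormedAddCommGroup H] [InnerProductSpace ℂ H]
    {E : Type*} [NormedAddCommGroup E] [InnerProductSpace ℂ E] [FiniteDimensional ℂ E]
    (N : ℕ) (hE : Module.finrank ℂ E = N)
    (ψ : ℕ → H) (φ : ℕ → E)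
    (hON : Orthonormal ℂ (fun n : ℕ => (WithLp.equiv 2 (H × E)).symm (ψ n, φ n)))
    (Θ : Finset ℕ) (hΘ : Θ.card = N)
    (hLI : LinearIndependent ℂ (fun n : Θ => φ n)) :
    (∃! T : H →L[ℂ] E, ∀ y : H, ∀ n ∈ Θ, ⟪T y, φ n⟫_ℂ = -⟪y, ψ n⟫_ℂ) ∧
      ∀ T : H →L[ℂ] E, (∀ y : H, ∀ n ∈ Θ, ⟪T y, φ n⟫_ℂ = -⟪y, ψ n⟫_ℂ) →
        ∀ m ∉ Θ, T (ψ m) = φ m := by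
  let b := basisOfLinearIndependentOfCardEqFinrank' _ hLI (by simp [hΘ, hE])
  have hb : ∀ i, b i = φ i := fun i => by simp [b]
  have hconstraint : ∀ T : H →L[ℂ] E, (∀ y : H, ∀ n ∈ Θ, ⟪T y, φ n⟫_ℂ = -⟪y, ψ n⟫_ℂ) ↔
      ∀ y (i : Θ), ⟪b i, T y⟫_ℂ = (-innerSL ℂ (ψ i)) y := fun T => by
    simp [hb, inner_eq_neg_inner_iff_swap (x := T _)]
  refine ⟨?_, fun T hT m hm => ?_⟩
  · simpa only [hconstraint] using
      b.existsUnique_continuousLinearMap_inner_eq fun i => -innerSL ℂ (ψ i)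
  · refine InnerProductSpace.ext_inner_left_basis b fun i => ?_
    rw [(hconstraint T).1 hT, hb]
    exact neg_eq_of_add_eq_zero_right
      (hON.inner_add_inner_eq_zero_of_ne (ne_of_mem_of_not_mem i.2 hm))

/-- If `(φ n)_{n ∈ Θ}` is linearly independent (hence a basis of `E`), then there is
a unique continuous linear map `T : H → E` with `⟪T y, φ n⟫ = -⟪y, ψ n⟫` for all `y ∈ H`,
`n ∈ Θ`; moreover this map satisfies `T (ψ m) = φ m` for all `m ∉ Θ`. -/
theorem stmt_3
    {H : Type*} [NormedAddCommGroup H] [InnerProductSpace ℂ H] [CompleteSpace H]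
    [TopologicalSpace.SeparableSpace H] (hH : ¬ FiniteDimensional ℂ H)
    {E : Type*} [NormedAddCommGroup E] [InnerProductSpace ℂ E] [FiniteDimensional ℂ E]
    (N : ℕ) (hN : 1 ≤ N) (hE : Module.finrank ℂ E = N)
    (ψ : ℕ → H) (φ : ℕ → E)
    (hON : Orthonormal ℂ (fun n : ℕ => (WithLp.equiv 2 (H × E)).symm (ψ n, φ n)))
    (hTotal : (Submodule.span ℂ
        (Set.range (fun n : ℕ => (WithLp.equiv 2 (H × E)).symm (ψ n, φ n)))).topologicalClosure
      = ⊤)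
    (Θ : Finset ℕ) (hΘ : Θ.card = N)
    (hLI : LinearIndependent ℂ (fun n : Θ => φ n)) :
    (∃! T : H →L[ℂ] E, ∀ y : H, ∀ n ∈ Θ, ⟪T y, φ n⟫_ℂ = -⟪y, ψ n⟫_ℂ) ∧
      ∀ T : H →L[ℂ] E, (∀ y : H, ∀ n ∈ Θ, ⟪T y, φ n⟫_ℂ = -⟪y, ψ n⟫_ℂ) →
        ∀ m ∉ Θ, T (ψ m) = φ m :=
  stmt_3_general N hE ψ φ hON Θ hΘ hLI
end

section
/- Let H be a separable infinite-dimensional complex Hilbert space, let E be a complex inner product space of finite dimension N ≥ 1, and let (ψ_n, φ_n)_{n ∈ ℕ} (with ψ_n ∈ H, φ_n ∈ E) be an orthonormal (Hilbert) basis of H × E with the product inner product. Let Θ ⊆ ℕ be a finite set of cardinality N, suppose (φ_n)_{n ∈ Θ} is linearly independent in E, and let T : H → E be the unique continuous linear map with ⟨T y, φ_n⟩_E = −⟨y, ψ_n⟩_H for all y ∈ H and n ∈ Θ. If y ∈ H satisfies ⟨y, ψ_n⟩_H + ⟨T y, φ_n⟩_E = 0 for every n ∈ ℕ∖Θ, then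 y = 0. -/
open scoped InnerProductSpace

theorem eq_zero_of_forall_inner_eq_zero_of_topologicalClosure_span_eq_top
    {𝕜 F ι : Type*} [RCLike 𝕜] [NormedAddCommGroup F] [InnerProductSpace 𝕜 F] {f : ι → F}
    (hf : (Submodule.span 𝕜 (Set.range f)).topologicalClosure = ⊤) {x : F}
    (hx : ∀ i, ⟪x, f i⟫_𝕜 = 0) : x = 0 := by
  have hortho : 𝕜 ∙ x ⟂ Submodule.span 𝕜 (Set.range f) :=
    Submodule.isOrtho_span.mpr <| by
      rintro _ rfl _ ⟨i, rfl⟩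
      exact hx i
  exact (Submodule.dense_iff_topologicalClosure_eq_top.mpr hf).eq_zero_of_mem_orthogonal
    (hortho.le (Submodule.mem_span_singleton_self x))

theorem stmt_4_general
    {H : Type*} [NormedAddCommGroup H] [InnerProductSpace ℂ H]
    {E : Type*} [NormedAddCommGroup E] [InnerProductSpace ℂ E]
    (ψ : ℕ → H) (φ : ℕ → E)
    (hTotal : (Submodule.span ℂ
        (Set.range (fun n : ℕ => (WithLp.equiv 2 (H × E)).symm (ψ n, φ n)))).topologicalClosure
      = ⊤)
    (Θ : Finset ℕ)
    (T : H →L[ℂ] E)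
    (hT : ∀ y : H, ∀ n ∈ Θ, ⟪T y, φ n⟫_ℂ = -⟪y, ψ n⟫_ℂ)
    (y : H)
    (hy : ∀ n ∉ Θ, ⟪y, ψ n⟫_ℂ + ⟪T y, φ n⟫_ℂ = 0) :
    y = 0 := by
  have horth : ∀ n, ⟪(WithLp.equiv 2 (H × E)).symm (y, T y),
      (WithLp.equiv 2 (H × E)).symm (ψ n, φ n)⟫_ℂ = 0 := by
    intro n
    simp only [WithLp.prod_inner_apply, WithLp.equiv_symm_apply]
    by_cases hn : n ∈ Θ
    · rw [hT y n hn, add_neg_cancel]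
    · exact hy n hn
  have hgraph := eq_zero_of_forall_inner_eq_zero_of_topologicalClosure_span_eq_top hTotal horth
  simpa using congrArg (fun v => (WithLp.ofLp v).1) hgraph

/-- With `T : H → E` the continuous linear map satisfying
`⟪T y, φ n⟫ = -⟪y, ψ n⟫` for `n ∈ Θ`, any `y ∈ H` with `⟪y, ψ n⟫ + ⟪T y, φ n⟫ = 0` for every
`n ∉ Θ` must vanish. -/
theorem stmt_4
    {H : Type*} [NormedAddCommGroup H] [InnerProductSpace ℂ H] [CompleteSpace H]
    [TopologicalSpace.SeparableSpace H] (hH : ¬ FiniteDimensional ℂ H)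
    {E : Type*} [NormedAddCommGroup E] [InnerProductSpace ℂ E] [FiniteDimensional ℂ E]
    (N : ℕ) (hN : 1 ≤ N) (hE : Module.finrank ℂ E = N)
    (ψ : ℕ → H) (φ : ℕ → E)
    (hON : Orthonormal ℂ (fun n : ℕ => (WithLp.equiv 2 (H × E)).symm (ψ n, φ n)))
    (hTotal : (Submodule.span ℂ
        (Set.range (fun n : ℕ => (WithLp.equiv 2 (H × E)).symm (ψ n, φ n)))).topologicalClosure
      = ⊤)
    (Θ : Finset ℕ) (hΘ : Θ.card = N)
    (hLI : LinearIndependent ℂ (fun n : Θ => φ n))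
    (T : H →L[ℂ] E)
    (hT : ∀ y : H, ∀ n ∈ Θ, ⟪T y, φ n⟫_ℂ = -⟪y, ψ n⟫_ℂ)
    (y : H)
    (hy : ∀ n ∉ Θ, ⟪y, ψ n⟫_ℂ + ⟪T y, φ n⟫_ℂ = 0) :
    y = 0 :=
  stmt_4_general ψ φ hTotal Θ T hT y hy
end

section
/- Let H be a separable infinite-dimensional complex Hilbert space, let E be a complex inner product space of finite dimension N ≥ 1, and let (ψ_n, φ_n)_{n ∈ ℕ} (with ψ_n ∈ H, φ_n ∈ E) be an orthonormal (Hilbert) basis of H × E with the product inner product. Let Θ ⊆ ℕ be a finite set of cardinality N and suppose (φ_n)_{n ∈ Θ} is linearly independent in E. Then there exist an inner product ⟨·,·⟩' on H and constants 0 < c ≤ C such that c‖y‖² ≤ ⟨y,y⟩' ≤ C‖y‖² for all y ∈ H, and such that the family (ψ_n)_{n ∈ ℕ∖Θ} is an orthonormal basis of H with respect to ⟨·,·⟩' (i.e., it is orthonormal for ⟨·,·⟩' and its linear span is dense in H). -/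
open scoped InnerProductSpace
open Submodule Set

/-!
Since `(φ n)_{n ∈ Θ}` is a basis of `E`, there is a bounded `T : H → E` with
`⟪φ n, T y⟫ = -⟪ψ n, y⟫` for `n ∈ Θ`, i.e. whose graph `y ↦ (y, T y)` is orthogonal to the
basis vectors `(ψ n, φ n)`, `n ∈ Θ`. The new inner product is the one pulled back along the graph,
hence equivalent to the old one. Orthogonality of `(ψ m, φ m)`, `m ∉ Θ`, to those basis vectors
gives `T ψ m = φ m`, so the graph sends `ψ m` to `(ψ m, φ m)` and orthonormality follows. The
orthogonal complement of finitely many vectors of a Hilbert basis lies in the closed span of the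
others (project onto it), so the graph lies in the closed span of the `(ψ m, φ m)`, `m ∉ Θ`;
projecting to `H` gives density of the `ψ m`.
-/

section Core

variable {𝕜 E F : Type*} [RCLike 𝕜] [NormedAddCommGroup E] [InnerProductSpace 𝕜 E]
  [AddCommGroup F] [Module 𝕜 F]

abbrev InnerProductSpace.Core.induced (f : F →ₗ[𝕜] E) (hf : Function.Injective f) :
    InnerProductSpace.Core 𝕜 F where
  inner x y := ⟪f x, f y⟫_𝕜
  conj_inner_symm x y := _root_.inner_conj_symm _ _
  re_inner_nonneg x := _root_.inner_self_nonneg (x := f x)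
  add_left x y z := by rw [map_add, _root_.inner_add_left]
  smul_left x y r := by rw [map_smul, _root_.inner_smul_left]
  definite x hx := hf <| by rw [map_zero]; exact _root_.inner_self_eq_zero.mp hx

theorem InnerProductSpace.Core.induced_inner (f : F →ₗ[𝕜] E) (hf : Function.Injective f)
    (x y : F) : (InnerProductSpace.Core.induced f hf).inner x y = ⟪f x, f y⟫_𝕜 :=
  rfl

end Core

section Graph

variable {𝕜 H E : Type*} [RCLike 𝕜] [NormedAddCommGroup H] [InnerProductSpace 𝕜 H]
  [NormedAddCommGroup E] [InnerProductSpace 𝕜 E]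

namespace ContinuousLinearMap

noncomputable def graphL2 (T : H →L[𝕜] E) : H →L[𝕜] WithLp 2 (H × E) :=
  (WithLp.prodContinuousLinearEquiv 2 𝕜 H E).symm.toContinuousLinearMap ∘L
    (ContinuousLinearMap.id 𝕜 H).prod T

variable (T : H →L[𝕜] E)

@[simp]
theorem graphL2_apply (y : H) : T.graphL2 y = WithLp.toLp 2 (y, T y) := rfl

theorem fstL_graphL2 (y : H) : WithLp.fstL 2 𝕜 H E (T.graphL2 y) = y := rfl

theorem graphL2_injective : Function.Injective T.graphL2 :=
  Function.LeftInverse.injective (T.fstL_graphL2)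

theorem norm_graphL2_sq (y : H) : ‖T.graphL2 y‖ ^ 2 = ‖y‖ ^ 2 + ‖T y‖ ^ 2 :=
  WithLp.prod_norm_sq_eq_of_L2 _

theorem norm_sq_le_norm_graphL2_sq (y : H) : ‖y‖ ^ 2 ≤ ‖T.graphL2 y‖ ^ 2 := by
  rw [norm_graphL2_sq]
  exact le_add_of_nonneg_right (sq_nonneg _)

theorem norm_graphL2_sq_le (y : H) : ‖T.graphL2 y‖ ^ 2 ≤ (1 + ‖T‖ ^ 2) * ‖y‖ ^ 2 := by
  have := T.le_opNorm y
  rw [norm_graphL2_sq]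
  nlinarith [norm_nonneg (T y), mul_nonneg T.opNorm_nonneg (norm_nonneg y)]

end ContinuousLinearMap

end Graph

namespace Module.Basis

variable {𝕜 E H ι : Type*} [RCLike 𝕜] [NormedAddCommGroup E] [InnerProductSpace 𝕜 E]
  [NormedAddCommGroup H] [InnerProductSpace 𝕜 H] [Fintype ι]

noncomputable def innerCoords (b : Basis ι 𝕜 E) : E ≃ₗ[𝕜] (ι → 𝕜) :=
  haveI := b.finiteDimensional_of_finite
  LinearMap.linearEquivOfInjective (LinearMap.pi fun i => (innerSL 𝕜 (b i)).toLinearMap)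
    (fun _ _ h => InnerProductSpace.ext_inner_left_basis b fun i => congrFun h i)
    (by simp [Module.finrank_eq_card_basis b])

theorem innerCoords_apply (b : Basis ι 𝕜 E) (x : E) (i : ι) : b.innerCoords x i = ⟪b i, x⟫_𝕜 :=
  rfl

noncomputable def liftInner (b : Basis ι 𝕜 E) (a : ι → H) : H →L[𝕜] E :=
  LinearMap.toContinuousLinearMap b.innerCoords.symm.toLinearMap ∘L
    ContinuousLinearMap.pi fun i => innerSL 𝕜 (a i)

theorem inner_liftInner (b : Basis ι 𝕜 E) (a : ι → H) (y : H) (i : ι) :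
    ⟪b i, b.liftInner a y⟫_𝕜 = ⟪a i, y⟫_𝕜 := by
  rw [← innerCoords_apply, liftInner, ContinuousLinearMap.comp_apply,
    LinearMap.coe_toContinuousLinearMap', LinearEquiv.coe_coe, LinearEquiv.apply_symm_apply]
  rfl

end Module.Basis

namespace Orthonormal

variable {𝕜 E ι : Type*} [RCLike 𝕜] [NormedAddCommGroup E] [InnerProductSpace 𝕜 E]
  {v : ι → E}

theorem span_image_compl_le_orthogonal (hv : Orthonormal 𝕜 v) (s : Set ι) :
    span 𝕜 (v '' sᶜ) ≤ (span 𝕜 (v '' s))ᗮ := by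
  refine (isOrtho_span.mpr ?_).le
  rintro _ ⟨i, hi, rfl⟩ _ ⟨j, hj, rfl⟩
  exact hv.inner_eq_zero fun hij => hi (hij ▸ hj)

theorem orthogonal_span_image_le_topologicalClosure (hv : Orthonormal 𝕜 v)
    (hv_dense : (span 𝕜 (range v)).topologicalClosure = ⊤) (s : Set ι)
    [(span 𝕜 (v '' s)).HasOrthogonalProjection] :
    (span 𝕜 (v '' s))ᗮ ≤ (span 𝕜 (v '' sᶜ)).topologicalClosure := by
  set K := span 𝕜 (v '' s)
  -- the projection onto `Kᗮ` fixes `v i` for `i ∉ s` and kills it for `i ∈ s`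
  have hP : (span 𝕜 (range v)).map (Kᗮ.starProjection : E →ₗ[𝕜] E) ≤ span 𝕜 (v '' sᶜ) := by
    rw [map_span, span_le]
    rintro _ ⟨_, ⟨i, rfl⟩, rfl⟩
    by_cases hi : i ∈ s
    · have : v i ∈ Kᗮᗮ := K.le_orthogonal_orthogonal (subset_span ⟨i, hi, rfl⟩)
      rw [SetLike.mem_coe, ContinuousLinearMap.coe_coe,
        (Kᗮ.starProjection_apply_eq_zero_iff).mpr this]
      exact zero_mem _
    · have : v i ∈ Kᗮ := hv.span_image_compl_le_orthogonal s (subset_span ⟨i, hi, rfl⟩)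
      rw [SetLike.mem_coe, ContinuousLinearMap.coe_coe, starProjection_eq_self_iff.mpr this]
      exact subset_span ⟨i, hi, rfl⟩
  intro x hx
  have : x ∈ (span 𝕜 (range v)).topologicalClosure.map (Kᗮ.starProjection : E →ₗ[𝕜] E) :=
    ⟨x, hv_dense ▸ mem_top, starProjection_eq_self_iff.mpr hx⟩
  exact topologicalClosure_mono hP (topologicalClosure_map _ _ this)

end Orthonormal

section GraphOrthogonal

variable {𝕜 H E ι : Type*} [RCLike 𝕜] [NormedAddCommGroup H] [InnerProductSpace 𝕜 H]
  [NormedAddCommGroup E] [InnerProductSpace 𝕜 E] {ψ : ι → H} {φ : ι → E} {s : Set ι}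
  {T : H →L[𝕜] E}

theorem Orthonormal.apply_eq_of_graphL2_orthogonal
    (hv : Orthonormal 𝕜 fun n => WithLp.toLp 2 (ψ n, φ n)) (hφ : span 𝕜 (φ '' s) = ⊤)
    (hT : ∀ y, ∀ n ∈ s, ⟪ψ n, y⟫_𝕜 + ⟪φ n, T y⟫_𝕜 = 0) {m : ι} (hm : m ∉ s) :
    T (ψ m) = φ m := by
  rw [← sub_eq_zero, ← Submodule.mem_bot 𝕜, ← Submodule.top_orthogonal_eq_bot, ← hφ]
  refine (isOrtho_span.mpr ?_).symm.le (mem_span_singleton_self _)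
  rintro _ ⟨n, hn, rfl⟩ _ rfl
  have hnm : ⟪ψ n, ψ m⟫_𝕜 + ⟪φ n, φ m⟫_𝕜 = 0 := hv.inner_eq_zero (ne_of_mem_of_not_mem hn hm)
  rw [inner_sub_right]
  linear_combination hT (ψ m) n hn - hnm

theorem Orthonormal.dense_span_image_compl_of_graphL2_orthogonal
    (hv : Orthonormal 𝕜 fun n => WithLp.toLp 2 (ψ n, φ n))
    (hv_dense : (span 𝕜 (range fun n => WithLp.toLp 2 (ψ n, φ n))).topologicalClosure = ⊤)
    (hs : s.Finite) (hT : ∀ y, ∀ n ∈ s, ⟪ψ n, y⟫_𝕜 + ⟪φ n, T y⟫_𝕜 = 0) :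
    (span 𝕜 (ψ '' sᶜ)).topologicalClosure = ⊤ := by
  set v := fun n => WithLp.toLp 2 (ψ n, φ n)
  have : FiniteDimensional 𝕜 (span 𝕜 (v '' s)) := .span_of_finite 𝕜 (hs.image v)
  have hmap : (span 𝕜 (v '' sᶜ)).map (WithLp.fstL 2 𝕜 H E : WithLp 2 (H × E) →ₗ[𝕜] H) =
      span 𝕜 (ψ '' sᶜ) := by
    rw [map_span, image_image]
    rfl
  refine eq_top_iff.mpr fun y _ =>
    hmap ▸ topologicalClosure_map _ _ ⟨T.graphL2 y, ?_, T.fstL_graphL2 y⟩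
  refine hv.orthogonal_span_image_le_topologicalClosure hv_dense s ?_
  refine (isOrtho_span.mpr ?_).symm.le (mem_span_singleton_self _)
  rintro _ ⟨n, hn, rfl⟩ _ rfl
  exact hT y n hn

end GraphOrthogonal

theorem stmt_5_general
    {H : Type*} [NormedAddCommGroup H] [InnerProductSpace ℂ H]
    {E : Type*} [NormedAddCommGroup E] [InnerProductSpace ℂ E] [FiniteDimensional ℂ E]
    (N : ℕ) (hE : Module.finrank ℂ E = N)
    (ψ : ℕ → H) (φ : ℕ → E)
    (hON : Orthonormal ℂ (fun n : ℕ => (WithLp.equiv 2 (H × E)).symm (ψ n, φ n)))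
    (hTotal : (Submodule.span ℂ
        (Set.range (fun n : ℕ => (WithLp.equiv 2 (H × E)).symm (ψ n, φ n)))).topologicalClosure
      = ⊤)
    (Θ : Finset ℕ) (hΘ : Θ.card = N)
    (hLI : LinearIndependent ℂ (fun n : Θ => φ n)) :
    ∃ (p : InnerProductSpace.Core ℂ H) (c C : ℝ), 0 < c ∧ c ≤ C ∧
      (∀ y : H, c * ‖y‖ ^ 2 ≤ RCLike.re (p.inner y y) ∧
        RCLike.re (p.inner y y) ≤ C * ‖y‖ ^ 2) ∧
      (∀ m ∉ Θ, ∀ n ∉ Θ, p.inner (ψ m) (ψ n) = if m = n then 1 else 0) ∧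
      (Submodule.span ℂ (ψ '' {n : ℕ | n ∉ Θ})).topologicalClosure = ⊤ := by
  have hcard : Fintype.card Θ = Module.finrank ℂ E := by simp [hE, hΘ]
  let b : Module.Basis Θ ℂ E := basisOfLinearIndependentOfCardEqFinrank' _ hLI hcard
  let T : H →L[ℂ] E := b.liftInner fun n => -ψ n
  have hT (y : H) : ∀ n ∈ (Θ : Set ℕ), ⟪ψ n, y⟫_ℂ + ⟪φ n, T y⟫_ℂ = 0 := fun n hn => by
    have := b.inner_liftInner (fun n => -ψ n) y ⟨n, hn⟩
    rw [coe_basisOfLinearIndependentOfCardEqFinrank', inner_neg_left] at this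
    rw [this, add_neg_cancel]
  have hφ : span ℂ (φ '' Θ) = ⊤ := by
    rw [image_eq_range]
    exact hLI.span_eq_top_of_card_eq_finrank' hcard
  have hTψ {m : ℕ} (hm : m ∉ Θ) : T (ψ m) = φ m := hON.apply_eq_of_graphL2_orthogonal hφ hT hm
  refine ⟨.induced T.graphL2.toLinearMap T.graphL2_injective, 1, 1 + ‖T‖ ^ 2, one_pos,
    le_add_of_nonneg_right (sq_nonneg _), fun y => ?_, fun m hm n hn => ?_,
    hON.dense_span_image_compl_of_graphL2_orthogonal hTotal Θ.finite_toSet hT⟩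
  · simp only [InnerProductSpace.Core.induced_inner, inner_self_eq_norm_sq, one_mul]
    exact ⟨T.norm_sq_le_norm_graphL2_sq y, T.norm_graphL2_sq_le y⟩
  · rw [InnerProductSpace.Core.induced_inner, ContinuousLinearMap.coe_coe, T.graphL2_apply,
      T.graphL2_apply, hTψ hm, hTψ hn]
    exact orthonormal_iff_ite.mp hON m n

/-- If `(φ n)_{n ∈ Θ}` is linearly independent, then there are an inner product
`⟨·,·⟩'` on `H` and constants `0 < c ≤ C` with `c‖y‖² ≤ ⟨y,y⟩' ≤ C‖y‖²`, for which
`(ψ n)_{n ∉ Θ}` is orthonormal and has dense linear span in `H`. -/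
theorem stmt_5
    {H : Type*} [NormedAddCommGroup H] [InnerProductSpace ℂ H] [CompleteSpace H]
    [TopologicalSpace.SeparableSpace H] (hH : ¬ FiniteDimensional ℂ H)
    {E : Type*} [NormedAddCommGroup E] [InnerProductSpace ℂ E] [FiniteDimensional ℂ E]
    (N : ℕ) (hN : 1 ≤ N) (hE : Module.finrank ℂ E = N)
    (ψ : ℕ → H) (φ : ℕ → E)
    (hON : Orthonormal ℂ (fun n : ℕ => (WithLp.equiv 2 (H × E)).symm (ψ n, φ n)))
    (hTotal : (Submodule.span ℂ
        (Set.range (fun n : ℕ => (WithLp.equiv 2 (H × E)).symm (ψ n, φ n)))).topologicalClosure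
      = ⊤)
    (Θ : Finset ℕ) (hΘ : Θ.card = N)
    (hLI : LinearIndependent ℂ (fun n : Θ => φ n)) :
    ∃ (p : InnerProductSpace.Core ℂ H) (c C : ℝ), 0 < c ∧ c ≤ C ∧
      (∀ y : H, c * ‖y‖ ^ 2 ≤ RCLike.re (p.inner y y) ∧
        RCLike.re (p.inner y y) ≤ C * ‖y‖ ^ 2) ∧
      (∀ m ∉ Θ, ∀ n ∉ Θ, p.inner (ψ m) (ψ n) = if m = n then 1 else 0) ∧
      (Submodule.span ℂ (ψ '' {n : ℕ | n ∉ Θ})).topologicalClosure = ⊤ :=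
  stmt_5_general N hE ψ φ hON hTotal Θ hΘ hLI
end

section
/- Let d ≥ 1 and let h_1 < h_2 < … < h_d be real numbers. Define the polynomials p(x) = ∏_{k=1}^{d} (h_k − x) and p_m(x) = ∏_{k=1, k≠m}^{d} (h_k − x) for m = 1, …, d. Let λ_1, …, λ_{d+1} be pairwise distinct real numbers. Then the (d+1) × (d+1) real matrix M with entries M_{k,m} = p_m(λ_k) for 1 ≤ m ≤ d and M_{k,d+1} = p(λ_k), for k = 1, …, d+1, is invertible (equivalently, det M ≠ 0). -/
open Finset Polynomial

/-- For real numbers `h 1 < … < h d` (`d ≥ 1`), `p(x) = ∏ (h k - x)`,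
`p_m(x) = ∏_{k ≠ m} (h k - x)`, and pairwise distinct reals `λ 1, …, λ (d+1)`, the
`(d+1) × (d+1)` matrix whose `k`-th row is `(p_1(λ k), …, p_d(λ k), p(λ k))` is invertible. -/
theorem stmt_7
    (d : ℕ) (hd : 1 ≤ d) (h : Fin d → ℝ) (hmono : StrictMono h)
    (lam : Fin (d + 1) → ℝ) (hlam : Function.Injective lam)
    (M : Matrix (Fin (d + 1)) (Fin (d + 1)) ℝ)
    (hM : ∀ (k m : Fin (d + 1)),
      M k m = if hm : (m : ℕ) < d
        then ∏ j ∈ Finset.univ.erase (⟨(m : ℕ), hm⟩ : Fin d), (h j - lam k)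
        else ∏ j : Fin d, (h j - lam k)) :
    IsUnit M ∧ M.det ≠ 0 := by
  have hdet : M.det ≠ 0 := by
    intro hdet0
    obtain ⟨v, hv, hMv⟩ := (Matrix.exists_mulVec_eq_zero_iff).2 hdet0
    -- the polynomials
    set q : Fin (d + 1) → ℝ[X] := fun m =>
      if hm : (m : ℕ) < d
        then ∏ j ∈ Finset.univ.erase (⟨(m : ℕ), hm⟩ : Fin d), (C (h j) - X)
        else ∏ j : Fin d, (C (h j) - X) with hq
    set P : ℝ[X] := ∑ m, C (v m) * q m with hP
    have hqeval : ∀ (m : Fin (d + 1)) (x : ℝ), (q m).eval x =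
        if hm : (m : ℕ) < d
          then ∏ j ∈ Finset.univ.erase (⟨(m : ℕ), hm⟩ : Fin d), (h j - x)
          else ∏ j : Fin d, (h j - x) := by
      intro m x
      rw [hq]
      by_cases hm : (m : ℕ) < d <;> simp [hm, eval_prod]
    have hqdeg : ∀ m : Fin (d + 1), (q m).natDegree ≤ d := by
      intro m
      rw [hq]
      by_cases hm : (m : ℕ) < d <;> simp only [hm, dif_pos, dif_neg, not_false_iff] <;>
        refine le_trans (natDegree_prod_le _ _) ?_ <;>
        refine le_trans (Finset.sum_le_card_nsmul _ _ 1 fun j _ => ?_) ?_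
      · exact le_trans (natDegree_sub_le _ _) (by simp)
      · simp only [smul_eq_mul, mul_one]
        exact le_trans (Finset.card_le_card (Finset.erase_subset _ _)) (by simp)
      · exact le_trans (natDegree_sub_le _ _) (by simp)
      · simp
    have hPdeg : P.natDegree ≤ d := by
      refine le_trans (natDegree_sum_le _ _) ?_
      refine Finset.fold_max_le d |>.2 ⟨Nat.zero_le d, fun m _ => ?_⟩
      exact le_trans (natDegree_mul_le) (by simpa using hqdeg m)
    have hPeval : ∀ k : Fin (d + 1), P.eval (lam k) = 0 := by
      intro k
      have := congrFun hMv k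
      simp only [Matrix.mulVec, dotProduct, Pi.zero_apply] at this
      rw [hP]
      simp only [eval_finset_sum, eval_mul, eval_C, hqeval]
      rw [← this]
      refine Finset.sum_congr rfl fun m _ => ?_
      rw [hM k m, mul_comm]
    have hP0 : P = 0 := by
      refine Polynomial.eq_zero_of_natDegree_lt_card_of_eval_eq_zero P hlam hPeval ?_
      simpa using Nat.lt_succ_of_le hPdeg
    -- evaluate at h j to kill the first d coefficients
    have hvlt : ∀ (m : Fin (d + 1)) (hm : (m : ℕ) < d), v m = 0 := by
      intro m hm
      have hev : P.eval (h ⟨m, hm⟩) = 0 := by rw [hP0]; simp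
      rw [hP] at hev
      simp only [eval_finset_sum, eval_mul, eval_C, hqeval] at hev
      rw [Finset.sum_eq_single m] at hev
      · simp only [hm, dif_pos] at hev
        have hprod : ∏ j ∈ Finset.univ.erase (⟨(m : ℕ), hm⟩ : Fin d),
            (h j - h ⟨m, hm⟩) ≠ 0 := by
          refine Finset.prod_ne_zero_iff.2 fun j hj => ?_
          have : j ≠ (⟨(m : ℕ), hm⟩ : Fin d) := Finset.ne_of_mem_erase hj
          exact sub_ne_zero.2 fun hE => this (hmono.injective hE)
        rcases mul_eq_zero.1 hev with h1 | h2
        · exact h1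
        · exact absurd h2 hprod
      · intro m' _ hne
        by_cases hm' : (m' : ℕ) < d
        · simp only [hm', dif_pos]
          have : (⟨(m : ℕ), hm⟩ : Fin d) ∈
              Finset.univ.erase (⟨(m' : ℕ), hm'⟩ : Fin d) := by
            refine Finset.mem_erase.2 ⟨?_, Finset.mem_univ _⟩
            intro hE
            apply hne
            have : (m : ℕ) = (m' : ℕ) := by
              simpa using congrArg (Fin.val) hE
            exact Fin.ext this.symm
          rw [Finset.prod_eq_zero this (by simp), mul_zero]
        · simp only [hm', dif_neg, not_false_iff]
          rw [Finset.prod_eq_zero (Finset.mem_univ (⟨(m : ℕ), hm⟩ : Fin d)) (by simp),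
            mul_zero]
      · simp
    -- now v (last) = 0 by evaluating at a point where p ≠ 0
    have hlast : v (Fin.last d) = 0 := by
      have h0 : (0 : ℕ) < d := hd
      set x : ℝ := h ⟨0, h0⟩ - 1 with hx
      have hev : P.eval x = 0 := by rw [hP0]; simp
      rw [hP] at hev
      simp only [eval_finset_sum, eval_mul, eval_C, hqeval] at hev
      rw [Finset.sum_eq_single (Fin.last d)] at hev
      · simp only [Fin.val_last, lt_irrefl, dif_neg, not_false_iff] at hev
        have hprod : ∏ j : Fin d, (h j - x) ≠ 0 := by
          refine Finset.prod_ne_zero_iff.2 fun j _ => ?_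
          have : h ⟨0, h0⟩ ≤ h j := hmono.monotone (by simp [Fin.le_def])
          rw [hx]; linarith
        rcases mul_eq_zero.1 hev with h1 | h2
        · exact h1
        · exact absurd h2 hprod
      · intro m' _ hne
        have hm' : (m' : ℕ) < d := by
          rcases lt_or_eq_of_le (Nat.lt_succ_iff.1 m'.isLt) with hlt | heq
          · exact hlt
          · exact absurd (Fin.ext heq) hne
        rw [hvlt m' hm', zero_mul]
      · simp
    have : v = 0 := by
      funext m
      by_cases hm : (m : ℕ) < d
      · exact hvlt m hm
      · have : m = Fin.last d := Fin.ext (Nat.le_antisymm (Nat.lt_succ_iff.1 m.isLt)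
          (Nat.le_of_not_lt hm))
        rw [this]; exact hlast
    exact hv this
  exact ⟨(Matrix.isUnit_iff_isUnit_det M).2 (isUnit_iff_ne_zero.2 hdet), hdet⟩
end

section
/- Let d ≥ 1, let h_1 < h_2 < … < h_d be real numbers, let δ_1, …, δ_d be positive real numbers, and let h_0 > 0. Let λ_1, …, λ_{d+1} be pairwise distinct real numbers with λ_k ≠ h_m for all k and m. Then the (d+1) × (d+1) real matrix A with entries A_{k,m} = δ_m / (λ_k − h_m) for 1 ≤ m ≤ d and A_{k,d+1} = −h_0, for k = 1, …, d+1, is invertible. -/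
open Finset Polynomial

/-- For `h 1 < … < h d` (`d ≥ 1`), positive `δ 1, …, δ d`, `h₀ > 0`, and pairwise
distinct reals `λ 1, …, λ (d+1)` with `λ k ≠ h m` for all `k, m`, the `(d+1) × (d+1)` matrix
whose `k`-th row is `(δ 1/(λ k - h 1), …, δ d/(λ k - h d), -h₀)` is invertible. -/
theorem stmt_9
    (d : ℕ) (hd : 1 ≤ d) (h : Fin d → ℝ) (hmono : StrictMono h)
    (δ : Fin d → ℝ) (hδ : ∀ m, 0 < δ m) (h₀ : ℝ) (hh₀ : 0 < h₀)
    (lam : Fin (d + 1) → ℝ) (hlam : Function.Injective lam)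
    (hne : ∀ (k : Fin (d + 1)) (m : Fin d), lam k ≠ h m)
    (A : Matrix (Fin (d + 1)) (Fin (d + 1)) ℝ)
    (hA : ∀ (k m : Fin (d + 1)),
      A k m = if hm : (m : ℕ) < d
        then δ (⟨(m : ℕ), hm⟩ : Fin d) / (lam k - h (⟨(m : ℕ), hm⟩ : Fin d))
        else -h₀) :
    IsUnit A ∧ A.det ≠ 0 := by
  have hinj : Function.Injective h := hmono.injective
  have hdet : A.det ≠ 0 := by
    intro hdet0
    obtain ⟨v, hv, hv0⟩ := (Matrix.exists_mulVec_eq_zero_iff (M := A)).mpr hdet0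
    -- the polynomial P
    set P : ℝ[X] :=
      (∑ m : Fin d, C (δ m * v m.castSucc) * ∏ j ∈ univ.erase m, (X - C (h j)))
        + C (-h₀ * v (Fin.last d)) * ∏ j : Fin d, (X - C (h j)) with hPdef
    have hevalP : ∀ x : ℝ, P.eval x =
        (∑ m : Fin d, δ m * v m.castSucc * ∏ j ∈ univ.erase m, (x - h j))
          + (-h₀ * v (Fin.last d)) * ∏ j : Fin d, (x - h j) := by
      intro x
      simp [hPdef, eval_finset_sum, eval_prod]
    -- expand mulVec
    have hmv : ∀ k : Fin (d + 1),
        (∑ m : Fin d, δ m / (lam k - h m) * v m.castSucc) + (-h₀) * v (Fin.last d) = 0 := by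
      intro k
      have h0 := congrFun hv0 k
      have hrw : A.mulVec v k =
          (∑ m : Fin d, δ m / (lam k - h m) * v m.castSucc) + (-h₀) * v (Fin.last d) := by
        rw [Matrix.mulVec, dotProduct, Fin.sum_univ_castSucc]
        congr 1
        · refine Finset.sum_congr rfl fun m _ => ?_
          rw [hA k m.castSucc, dif_pos (by simp : ((m.castSucc : Fin (d+1)) : ℕ) < d)]
          simp
        · rw [hA k (Fin.last d), dif_neg (by simp)]
      rw [← hrw, h0]
      rfl
    -- P vanishes at each lam k
    have hroot : ∀ k, P.eval (lam k) = 0 := by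
      intro k
      rw [hevalP]
      have hD : ∀ m : Fin d, lam k - h m ≠ 0 := fun m => sub_ne_zero.mpr (hne k m)
      have := hmv k
      calc (∑ m : Fin d, δ m * v m.castSucc * ∏ j ∈ univ.erase m, (lam k - h j))
            + (-h₀ * v (Fin.last d)) * ∏ j : Fin d, (lam k - h j)
          = (∏ j : Fin d, (lam k - h j)) *
            ((∑ m : Fin d, δ m / (lam k - h m) * v m.castSucc) + (-h₀) * v (Fin.last d)) := by
            rw [mul_add, Finset.mul_sum]
            congr 1
            · refine Finset.sum_congr rfl fun m _ => ?_
              rw [← Finset.mul_prod_erase _ _ (Finset.mem_univ m)]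
              field_simp
              rw [eq_div_iff (hD m)]
            · ring
        _ = 0 := by rw [this, mul_zero]
    -- degree bound
    have hdeg : P.natDegree < Fintype.card (Fin (d + 1)) := by
      rw [Fintype.card_fin]
      have hpe : ∀ s : Finset (Fin d), (∏ j ∈ s, (X - C (h j)) : ℝ[X]).natDegree = s.card := by
        intro s
        rw [natDegree_prod _ _ fun j _ => X_sub_C_ne_zero (h j)]
        simp [natDegree_X_sub_C]
      have h1 : ∀ m : Fin d,
          (C (δ m * v m.castSucc) * ∏ j ∈ univ.erase m, (X - C (h j))).natDegree ≤ d := by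
        intro m
        refine le_trans natDegree_mul_le ?_
        rw [natDegree_C, hpe, zero_add, Finset.card_erase_of_mem (Finset.mem_univ m),
          Finset.card_univ, Fintype.card_fin]
        omega
      have h2 : (C (-h₀ * v (Fin.last d)) * ∏ j : Fin d, (X - C (h j))).natDegree ≤ d := by
        refine le_trans natDegree_mul_le ?_
        rw [natDegree_C, hpe, zero_add, Finset.card_univ, Fintype.card_fin]
      have : P.natDegree ≤ d := by
        refine le_trans (natDegree_add_le _ _) (max_le ?_ h2)
        exact le_trans (natDegree_sum_le _ _)
          ((Finset.fold_max_le d).mpr ⟨Nat.zero_le d, fun m _ => h1 m⟩)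
      omega
    have hP0 : P = 0 := eq_zero_of_natDegree_lt_card_of_eval_eq_zero P hlam hroot hdeg
    -- v vanishes on castSucc indices
    have hvc : ∀ m : Fin d, v m.castSucc = 0 := by
      intro m
      have he : P.eval (h m) = 0 := by rw [hP0]; simp
      rw [hevalP] at he
      have hz : ∀ m' : Fin d, m' ≠ m →
          δ m' * v m'.castSucc * ∏ j ∈ univ.erase m', (h m - h j) = 0 := by
        intro m' hm'
        have : ∏ j ∈ univ.erase m', (h m - h j) = 0 := by
          apply Finset.prod_eq_zero (i := m)
          · exact Finset.mem_erase.mpr ⟨hm'.symm, Finset.mem_univ m⟩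
          · ring
        rw [this, mul_zero]
      have hlastz : (-h₀ * v (Fin.last d)) * ∏ j : Fin d, (h m - h j) = 0 := by
        have : ∏ j : Fin d, (h m - h j) = 0 :=
          Finset.prod_eq_zero (Finset.mem_univ m) (by ring)
        rw [this, mul_zero]
      rw [Finset.sum_eq_single m (fun m' _ hm' => hz m' hm') (by simp), hlastz, add_zero] at he
      have hprod : ∏ j ∈ univ.erase m, (h m - h j) ≠ 0 := by
        refine Finset.prod_ne_zero_iff.mpr fun j hj => ?_
        exact sub_ne_zero.mpr fun hc => (Finset.mem_erase.mp hj).1 (hinj hc.symm)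
      rcases mul_eq_zero.mp he with h' | h'
      · rcases mul_eq_zero.mp h' with h'' | h''
        · exact absurd h'' (ne_of_gt (hδ m))
        · exact h''
      · exact absurd h' hprod
    -- last coordinate vanishes
    have hvl : v (Fin.last d) = 0 := by
      have : P = C (-h₀ * v (Fin.last d)) * ∏ j : Fin d, (X - C (h j)) := by
        rw [hPdef]
        rw [Finset.sum_eq_zero fun m _ => by rw [hvc m]; simp, zero_add]
      rw [hP0] at this
      have hmon : (∏ j : Fin d, (X - C (h j)) : ℝ[X]) ≠ 0 :=
        (monic_prod_of_monic _ _ fun j _ => monic_X_sub_C (h j)).ne_zero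
      rcases mul_eq_zero.mp this.symm with h' | h'
      · have := C_eq_zero.mp h'
        have hh : -h₀ ≠ 0 := neg_ne_zero.mpr (ne_of_gt hh₀)
        exact (mul_eq_zero.mp this).resolve_left hh
      · exact absurd h' hmon
    apply hv
    funext i
    refine Fin.lastCases ?_ ?_ i
    · exact hvl
    · exact hvc
  exact ⟨(Matrix.isUnit_iff_isUnit_det A).mpr (isUnit_iff_ne_zero.mpr hdet), hdet⟩
end

section
/- Let c be a real number, m a nonzero integer, and ξ : ℕ → ℝ a sequence with n·ξ_n → 0 as n → ∞. Let β : ℕ → ℝ satisfy β_n ≠ 0 and β_n = (−1)^n (n − c)^m (1 + ξ_n) for every n ∈ ℕ, where (n:ℝ) ≠ c for all n ∈ ℕ. Then there exists N ∈ ℕ such that β_{n₁} ≠ β_{n₂} whenever N ≤ n₁ < n₂; in particular, the set of pairs (n₁, n₂) with n₁ < n₂ and β_{n₁} = β_{n₂} is finite. -/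
open Filter

private lemma key_ineq (t a b x y : ℝ) (k : ℕ) (hk : 1 ≤ k) (ht : 1 ≤ t)
    (ha : 1 ≤ a) (hab : a + 1 ≤ b) (han : a ≤ 2*t)
    (hx : -(1/(8*t)) ≤ x) (hy : y ≤ 1/(8*t)) :
    a^k * (1+y) < b^k * (1+x) := by
  obtain ⟨j, rfl⟩ : ∃ j, k = j+1 := ⟨k-1, by omega⟩
  have ht0 : (0:ℝ) < t := by linarith
  have hb : (1:ℝ) ≤ b := by linarith
  have haj : (0:ℝ) < a^j := pow_pos (by linarith) j
  have hbj : a^j ≤ b^j := pow_le_pow_left₀ (by linarith) (by linarith) j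
  have h1 : a^(j+1) * (1 + 1/(2*t)) ≤ b^(j+1) := by
    have e2 : a^j * a/(2*t) ≤ a^j := by
      rw [div_le_iff₀ (by linarith)]
      nlinarith
    have e3 : a^j * b ≤ b^j * b := by nlinarith
    calc a^(j+1)*(1+1/(2*t)) = a^j*a + a^j*a/(2*t) := by rw [pow_succ]; ring
      _ ≤ a^j * a + a^j := by linarith
      _ = a^j * (a+1) := by ring
      _ ≤ a^j * b := by nlinarith
      _ ≤ b^j * b := e3
      _ = b^(j+1) := (pow_succ b j).symm
  have hx1 : (0:ℝ) < 1 + x := by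
    have : 1/(8*t) ≤ 1/8 := by
      apply div_le_div_of_nonneg_left <;> linarith
    linarith
  have h2 : (1+y) < (1+1/(2*t))*(1+x) := by
    have h8 : 1/(8*t) = 1/8 * (1/t) := by ring
    have h2' : 1/(2*t) = 1/2 * (1/t) := by ring
    have hti : (0:ℝ) < 1/t := by positivity
    have hti1 : 1/t ≤ 1 := by rw [div_le_one ht0]; linarith
    nlinarith [mul_pos hti hti]
  calc a^(j+1) * (1+y) < a^(j+1) * ((1+1/(2*t))*(1+x)) := by
        apply mul_lt_mul_of_pos_left h2 (pow_pos (by linarith) _)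
    _ = (a^(j+1) * (1+1/(2*t))) * (1+x) := by ring
    _ ≤ b^(j+1) * (1+x) := mul_le_mul_of_nonneg_right h1 (le_of_lt hx1)


/-- If `β n = (-1)^n (n - c)^m (1 + ξ n)` with `m ≠ 0` a (possibly negative)
integer, `n · ξ n → 0`, `β n ≠ 0` and `(n : ℝ) ≠ c` for all `n`, then `β n₁ ≠ β n₂` for all
sufficiently large `n₁ < n₂`; in particular only finitely many pairs `n₁ < n₂` have
`β n₁ = β n₂`. -/
theorem stmt_11
    (c : ℝ) (m : ℤ) (hm : m ≠ 0)
    (ξ : ℕ → ℝ) (hξ : Tendsto (fun n : ℕ => (n : ℝ) * ξ n) atTop (nhds 0))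
    (hc : ∀ n : ℕ, (n : ℝ) ≠ c)
    (β : ℕ → ℝ) (hβ0 : ∀ n, β n ≠ 0)
    (hβ : ∀ n : ℕ, β n = (-1 : ℝ) ^ n * ((n : ℝ) - c) ^ m * (1 + ξ n)) :
    (∃ N : ℕ, ∀ n₁ n₂ : ℕ, N ≤ n₁ → n₁ < n₂ → β n₁ ≠ β n₂) ∧
      Set.Finite {p : ℕ × ℕ | p.1 < p.2 ∧ β p.1 = β p.2} := by
  -- extract k = |m|
  obtain ⟨k, hk1, hkm⟩ : ∃ k : ℕ, 1 ≤ k ∧ (m = (k:ℤ) ∨ m = -(k:ℤ)) := by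
    rcases lt_or_gt_of_ne hm with h|h
    · exact ⟨(-m).toNat, by omega, Or.inr (by omega)⟩
    · exact ⟨m.toNat, by omega, Or.inl (by omega)⟩
  -- choose N₁ handling ξ
  have h8 : ∀ᶠ x : ℝ in nhds 0, |x| ≤ 1/8 := by
    have := eventually_abs_sub_lt (0:ℝ) (show (0:ℝ) < 1/8 by norm_num)
    filter_upwards [this] with x hx
    simpa using hx.le
  obtain ⟨N₁, hN₁⟩ := (eventually_atTop).1 (hξ.eventually h8)
  set N : ℕ := max N₁ (max 1 (⌈|c| + 2⌉₊)) with hNdef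
  -- basic facts for n ≥ N
  have hfacts : ∀ n : ℕ, N ≤ n → 1 ≤ (n:ℝ) - c ∧ (n:ℝ) - c ≤ 2*n ∧ |ξ n| ≤ 1/(8*n) ∧ 1 ≤ (n:ℝ) := by
    intro n hn
    have h1 : N₁ ≤ n := le_trans (le_max_left _ _) hn
    have h2 : (1:ℕ) ≤ n := le_trans (le_trans (le_max_left _ _) (le_max_right _ _)) hn
    have h3 : ⌈|c| + 2⌉₊ ≤ n := le_trans (le_trans (le_max_right _ _) (le_max_right _ _)) hn
    have h3' : |c| + 2 ≤ (n:ℝ) := by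
      calc |c| + 2 ≤ (⌈|c| + 2⌉₊ : ℝ) := Nat.le_ceil _
        _ ≤ (n:ℝ) := by exact_mod_cast h3
    have hcabs := abs_le.1 (le_refl |c|) -- dummy
    have hc1 : 1 ≤ (n:ℝ) - c := by
      have := neg_abs_le c
      have := le_abs_self c
      linarith
    have hc2 : (n:ℝ) - c ≤ 2*n := by
      have := neg_abs_le c
      have hn1 : |c| ≤ (n:ℝ) := by linarith
      linarith
    have hn0 : (0:ℝ) < n := by exact_mod_cast h2
    have hξn : |ξ n| ≤ 1/(8*n) := by
      have := hN₁ n h1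
      rw [abs_mul, abs_of_nonneg (le_of_lt hn0)] at this
      rw [le_div_iff₀ (by positivity)] at this ⊢
      calc |ξ n| * (8*n) = ((n:ℝ) * |ξ n|) * 8 := by ring
        _ ≤ (1/8) * 8 := by nlinarith
        _ = 1 := by norm_num
    exact ⟨hc1, hc2, hξn, by exact_mod_cast h2⟩
  have hN1 : 1 ≤ N := le_trans (le_max_left _ _) (le_max_right _ _)
  -- |β n| = (n-c)^m (1+ξ n) for n ≥ N, and positivity
  have hAbs : ∀ n : ℕ, N ≤ n → |β n| = ((n:ℝ) - c) ^ m * (1 + ξ n) := by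
    intro n hn
    obtain ⟨hc1, hc2, hξn, hn1⟩ := hfacts n hn
    have hpos : (0:ℝ) < ((n:ℝ) - c) ^ m * (1 + ξ n) := by
      have h1 : (0:ℝ) < ((n:ℝ) - c) ^ m := zpow_pos (by linarith) m
      have h2 : (0:ℝ) < 1 + ξ n := by
        have := abs_le.1 hξn
        have : -(1/(8*(n:ℝ))) ≤ ξ n := this.1
        have h18 : 1/(8*(n:ℝ)) ≤ 1/8 := by
          apply div_le_div_of_nonneg_left <;> linarith
        linarith
      exact mul_pos h1 h2
    rw [hβ n, abs_mul, abs_mul]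
    have hn1' : |(-1:ℝ)^n| = 1 := by rw [abs_pow]; norm_num
    rw [hn1', one_mul, ← abs_mul, abs_of_pos hpos]
  -- key comparison: for N ≤ n₁ < n₂, the absolute values differ
  have hAne : ∀ n₁ n₂ : ℕ, N ≤ n₁ → n₁ < n₂ →
      ((n₁:ℝ) - c) ^ m * (1 + ξ n₁) ≠ ((n₂:ℝ) - c) ^ m * (1 + ξ n₂) := by
    intro n₁ n₂ hn₁ hlt
    obtain ⟨ha1, ha2, hξ1, ht1⟩ := hfacts n₁ hn₁
    obtain ⟨hb1, hb2, hξ2, ht2⟩ := hfacts n₂ (le_trans hn₁ (le_of_lt hlt))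
    set a : ℝ := (n₁:ℝ) - c
    set b : ℝ := (n₂:ℝ) - c
    have hab : a + 1 ≤ b := by
      have : (n₁:ℝ) + 1 ≤ (n₂:ℝ) := by exact_mod_cast Nat.succ_le_of_lt hlt
      simp only [a, b]; linarith
    have hn12 : (n₁:ℝ) ≤ (n₂:ℝ) := by exact_mod_cast le_of_lt hlt
    have hξ2' : |ξ n₂| ≤ 1/(8*(n₁:ℝ)) := by
      refine le_trans hξ2 ?_
      apply div_le_div_of_nonneg_left <;> linarith
    have habs1 := abs_le.1 hξ1
    have habs2 := abs_le.1 hξ2'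
    rcases hkm with rfl | rfl
    · -- m = k : strictly increasing
      have key := key_ineq (n₁:ℝ) a b (ξ n₂) (ξ n₁) k hk1 ht1 ha1 hab ha2 habs2.1 habs1.2
      rw [zpow_natCast, zpow_natCast]
      exact ne_of_lt key
    · -- m = -k : strictly decreasing
      have key := key_ineq (n₁:ℝ) a b (ξ n₁) (ξ n₂) k hk1 ht1 ha1 hab ha2 habs1.1 habs2.2
      have hak : (0:ℝ) < a^k := pow_pos (by linarith) k
      have hbk : (0:ℝ) < b^k := pow_pos (by linarith) k
      rw [zpow_neg, zpow_neg, zpow_natCast, zpow_natCast]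
      intro heq
      rw [inv_mul_eq_div, inv_mul_eq_div, div_eq_div_iff (ne_of_gt hak) (ne_of_gt hbk)] at heq
      nlinarith
  -- main: first conjunct
  have hmain : ∀ n₁ n₂ : ℕ, N ≤ n₁ → n₁ < n₂ → β n₁ ≠ β n₂ := by
    intro n₁ n₂ hn₁ hlt heq
    have hn₂ : N ≤ n₂ := le_trans hn₁ (le_of_lt hlt)
    have habs : |β n₁| = |β n₂| := by rw [heq]
    rw [hAbs n₁ hn₁, hAbs n₂ hn₂] at habs
    -- same absolute value contradicts hAne unless... it always does
    exact hAne n₁ n₂ hn₁ hlt habs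
  refine ⟨⟨N, hmain⟩, ?_⟩
  -- finiteness: find M beyond which |β n| avoids all |β i|, i < N
  have hVne : (Finset.range N).Nonempty := ⟨0, Finset.mem_range.2 (by omega)⟩
  set V : Finset ℝ := (Finset.range N).image fun i => |β i| with hV
  have hVne' : V.Nonempty := hVne.image _
  have hM : ∃ M : ℕ, N ≤ M ∧ ∀ n : ℕ, M ≤ n → ∀ i : ℕ, i < N → |β i| ≠ |β n| := by
    rcases hkm with rfl | rfl
    · -- m = k : |β n| → ∞
      set B := V.max' hVne' with hB
      refine ⟨max N (⌈2*B + |c| + 1⌉₊), le_max_left _ _, ?_⟩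
      intro n hn i hi
      have hnN : N ≤ n := le_trans (le_max_left _ _) hn
      obtain ⟨hb1, hb2, hξn, ht⟩ := hfacts n hnN
      have hBn : 2*B + |c| + 1 ≤ (n:ℝ) := by
        calc 2*B + |c| + 1 ≤ (⌈2*B + |c| + 1⌉₊:ℝ) := Nat.le_ceil _
          _ ≤ (n:ℝ) := by exact_mod_cast le_trans (le_max_right _ _) hn
      have hbB : 2*B + 1 ≤ (n:ℝ) - c := by
        have := le_abs_self c; linarith
      have hβn : B < |β n| := by
        rw [hAbs n hnN, zpow_natCast]
        have hbk : ((n:ℝ)-c) ≤ ((n:ℝ)-c)^k := le_self_pow₀ (by linarith) (by omega)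
        have hξpos : 1/2 ≤ 1 + ξ n := by
          have h1 := (abs_le.1 hξn).1
          have h18 : 1/(8*(n:ℝ)) ≤ 1/8 := by
            apply div_le_div_of_nonneg_left <;> linarith
          linarith
        calc B < ((n:ℝ)-c) * (1/2) := by nlinarith
          _ ≤ ((n:ℝ)-c)^k * (1 + ξ n) := by nlinarith
      have hiB : |β i| ≤ B :=
        Finset.le_max' V _ (Finset.mem_image_of_mem _ (Finset.mem_range.2 hi))
      intro heq; rw [heq] at hiB; linarith
    · -- m = -k : |β n| → 0
      set ε := V.min' hVne' with hε'
      have hε : 0 < ε := by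
        apply (Finset.lt_min'_iff V hVne').2
        intro y hy
        obtain ⟨i, _, rfl⟩ := Finset.mem_image.1 hy
        exact abs_pos.2 (hβ0 i)
      refine ⟨max N (⌈|c| + 2/ε + 1⌉₊), le_max_left _ _, ?_⟩
      intro n hn i hi
      have hnN : N ≤ n := le_trans (le_max_left _ _) hn
      obtain ⟨hb1, hb2, hξn, ht⟩ := hfacts n hnN
      have hBn : |c| + 2/ε + 1 ≤ (n:ℝ) := by
        calc |c| + 2/ε + 1 ≤ (⌈|c| + 2/ε + 1⌉₊:ℝ) := Nat.le_ceil _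
          _ ≤ (n:ℝ) := by exact_mod_cast le_trans (le_max_right _ _) hn
      set b : ℝ := (n:ℝ) - c with hbdef
      have hbb : 2/ε + 1 ≤ b := by
        have := le_abs_self c
        simp only [hbdef]; linarith
      have h2ε : (0:ℝ) < 2/ε := by positivity
      have hβn : |β n| < ε := by
        rw [hAbs n hnN, zpow_neg, zpow_natCast]
        have hbk : b ≤ b^k := le_self_pow₀ (by linarith) (by omega)
        have hbk0 : (0:ℝ) < b^k := pow_pos (by linarith) k
        have hinv : (b^k)⁻¹ ≤ b⁻¹ := by
          apply inv_anti₀ (by linarith) hbk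
        have hξ2 : 1 + ξ n ≤ 2 := by
          have h1 := (abs_le.1 hξn).2
          have h18 : 1/(8*(n:ℝ)) ≤ 1/8 := by
            apply div_le_div_of_nonneg_left <;> linarith
          linarith
        have hξ0 : 0 ≤ 1 + ξ n := by
          have h1 := (abs_le.1 hξn).1
          have h18 : 1/(8*(n:ℝ)) ≤ 1/8 := by
            apply div_le_div_of_nonneg_left <;> linarith
          linarith
        calc (b^k)⁻¹ * (1 + ξ n) ≤ b⁻¹ * 2 := by
              apply mul_le_mul hinv hξ2 hξ0 (by positivity)
          _ = 2/b := by ring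
          _ < ε := by
              rw [div_lt_iff₀ (by linarith)]
              have hc2 : 2/ε * ε = 2 := div_mul_cancel₀ 2 (ne_of_gt hε)
              nlinarith [mul_le_mul_of_nonneg_left hbb hε.le]
      have hiB : ε ≤ |β i| :=
        Finset.min'_le V _ (Finset.mem_image_of_mem _ (Finset.mem_range.2 hi))
      intro heq; rw [heq] at hiB; linarith
  obtain ⟨M, hMN, hMne⟩ := hM
  apply Set.Finite.subset ((Set.finite_Iio M).prod (Set.finite_Iio M))
  rintro ⟨n₁, n₂⟩ ⟨hlt, heq⟩
  have h2 : n₂ < M := by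
    by_contra h
    push_neg at h
    rcases lt_or_ge n₁ N with h1 | h1
    · exact hMne n₂ h n₁ h1 (by rw [heq])
    · exact hmain n₁ n₂ h1 hlt heq
  exact ⟨lt_trans hlt h2, h2⟩
end
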